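/- For a unilateral weighted shift S with positive bounded weights, the spectrum of S is the closed disc {λ ∈ ℂ : |λ| ≤ r(S)}, where r(S) is the spectral radius. -/

import Mathlib

open Filter
open scoped ENNReal NNReal

variable {H : Type*} [NormedAddCommGroup H] [InnerProductSpace ℂ H] [CompleteSpace H]

local notation "⟪" x ", " y "⟫" => @inner ℂ _ _ x y

namespace WeightedShiftAux

/-- Parseval-type identity for a Hilbert basis. -/
lemma hasSum_norm_sq_inner (e : HilbertBasis ℕ ℂ H) (y : H) :
    HasSum (fun m => ‖⟪e m, y⟫‖ ^ 2) (‖y‖ ^ 2) := by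
  have h := (e.hasSum_inner_mul_inner y y).mapL Complex.reCLM
  have h1 : (fun m => Complex.reCLM (⟪y, e m⟫ * ⟪e m, y⟫))
      = fun m => ‖⟪e m, y⟫‖ ^ 2 := by
    funext m
    rw [← inner_conj_symm y (e m), RCLike.conj_mul]
    norm_cast
  have h2 : Complex.reCLM ⟪y, y⟫ = ‖y‖ ^ 2 := by
    simpa using inner_self_eq_norm_sq (𝕜 := ℂ) y
  rwa [h1, h2] at h

lemma inner_basis_basis (e : HilbertBasis ℕ ℂ H) (i j : ℕ) :
    ⟪e i, e j⟫ = if i = j then 1 else 0 :=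
  orthonormal_iff_ite.mp e.orthonormal i j

lemma norm_basis (e : HilbertBasis ℕ ℂ H) (i : ℕ) : ‖e i‖ = 1 :=
  e.orthonormal.1 i

section Shift

variable (S : H →L[ℂ] H) (e : HilbertBasis ℕ ℂ H) (ω : ℕ → ℝ)

lemma adjoint_zero (hS : ∀ n, S (e n) = (ω n : ℂ) • e (n + 1)) :
    ContinuousLinearMap.adjoint S (e 0) = 0 := by
  apply e.repr.injective
  apply lp.ext
  funext i
  rw [map_zero e.repr, e.repr_apply_apply]
  have : ⟪e i, ContinuousLinearMap.adjoint S (e 0)⟫ = ⟪S (e i), e 0⟫ :=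
    ContinuousLinearMap.adjoint_inner_right S (e i) (e 0)
  rw [this, hS i, inner_smul_left, inner_basis_basis, if_neg (Nat.succ_ne_zero i)]
  simp

lemma adjoint_succ (hS : ∀ n, S (e n) = (ω n : ℂ) • e (n + 1)) (m : ℕ) :
    ContinuousLinearMap.adjoint S (e (m + 1)) = (ω m : ℂ) • e m := by
  apply e.repr.injective
  apply lp.ext
  funext i
  rw [e.repr_apply_apply, e.repr_apply_apply]
  have h1 : ⟪e i, ContinuousLinearMap.adjoint S (e (m + 1))⟫ = ⟪S (e i), e (m + 1)⟫ :=
    ContinuousLinearMap.adjoint_inner_right S (e i) (e (m + 1))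
  rw [h1, hS i, inner_smul_left, inner_smul_right, inner_basis_basis, inner_basis_basis]
  by_cases h : i = m
  · subst h; simp
  · rw [if_neg (by omega), if_neg h]
    simp

/-- The iterated adjoint on basis vectors. -/
lemma adjoint_pow (hS : ∀ n, S (e n) = (ω n : ℂ) • e (n + 1)) (n : ℕ) :
    (∀ m, (ContinuousLinearMap.adjoint S ^ n) (e (m + n))
        = ((∏ j ∈ Finset.range n, ω (m + j) : ℝ) : ℂ) • e m) ∧
      (∀ m, m < n → (ContinuousLinearMap.adjoint S ^ n) (e m) = 0) := by
  induction n with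
  | zero => simp
  | succ n ih =>
    have hmul : ∀ v : H, (ContinuousLinearMap.adjoint S ^ (n + 1)) v
        = (ContinuousLinearMap.adjoint S ^ n) (ContinuousLinearMap.adjoint S v) := by
      intro v
      rw [pow_succ]
      rfl
    constructor
    · intro m
      have hidx : m + (n + 1) = (m + n) + 1 := by ring
      rw [hmul, hidx, adjoint_succ S e ω hS, map_smul, ih.1 m,
        Finset.prod_range_succ]
      rw [smul_smul]
      congr 1
      push_cast
      ring
    · intro m hm
      cases m with
      | zero =>
        rw [hmul, adjoint_zero S e ω hS, map_zero]
      | succ m =>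
        rw [hmul, adjoint_succ S e ω hS, map_smul, ih.2 m (by omega), smul_zero]

lemma inner_pow_apply (hS : ∀ n, S (e n) = (ω n : ℂ) • e (n + 1)) (n m : ℕ) (x : H) :
    ⟪e (m + n), (S ^ n) x⟫
      = ((∏ j ∈ Finset.range n, ω (m + j) : ℝ) : ℂ) * ⟪e m, x⟫ := by
  have h0 : ⟪e (m + n), (S ^ n) x⟫
      = ⟪(ContinuousLinearMap.adjoint (S ^ n)) (e (m + n)), x⟫ :=
    (ContinuousLinearMap.adjoint_inner_left (S ^ n) x (e (m + n))).symm
  rw [h0, ← ContinuousLinearMap.star_eq_adjoint, star_pow,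
    ContinuousLinearMap.star_eq_adjoint, (adjoint_pow S e ω hS n).1 m,
    inner_smul_left]
  simp

lemma inner_pow_apply_zero (hS : ∀ n, S (e n) = (ω n : ℂ) • e (n + 1)) {n m : ℕ}
    (hm : m < n) (x : H) : ⟪e m, (S ^ n) x⟫ = 0 := by
  have h0 : ⟪e m, (S ^ n) x⟫
      = ⟪(ContinuousLinearMap.adjoint (S ^ n)) (e m), x⟫ :=
    (ContinuousLinearMap.adjoint_inner_left (S ^ n) x (e m)).symm
  rw [h0, ← ContinuousLinearMap.star_eq_adjoint, star_pow,
    ContinuousLinearMap.star_eq_adjoint, (adjoint_pow S e ω hS n).2 m hm,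
    inner_zero_left]

/-- Norm bound for powers of the shift from a uniform bound on the weight products. -/
lemma opNorm_pow_le (hpos : ∀ n, 0 < ω n)
    (hS : ∀ n, S (e n) = (ω n : ℂ) • e (n + 1)) (n : ℕ) {C : ℝ} (hC : 0 ≤ C)
    (hW : ∀ k, (∏ j ∈ Finset.range n, ω (k + j)) ≤ C) : ‖S ^ n‖ ≤ C := by
  refine ContinuousLinearMap.opNorm_le_bound _ hC fun x => ?_
  have hy := hasSum_norm_sq_inner e ((S ^ n) x)
  have hx := hasSum_norm_sq_inner e x
  have hinj : Function.Injective (fun m : ℕ => m + n) := fun a b h => by simpa using h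
  have hvanish : ∀ m ∉ Set.range (fun m : ℕ => m + n), ‖⟪e m, (S ^ n) x⟫‖ ^ 2 = 0 := by
    intro m hm
    have hmn : m < n := by
      by_contra h
      exact hm ⟨m - n, by show m - n + n = m; omega⟩
    rw [inner_pow_apply_zero S e ω hS hmn]
    simp
  have hy' : HasSum (fun m => ‖⟪e (m + n), (S ^ n) x⟫‖ ^ 2) (‖(S ^ n) x‖ ^ 2) :=
    (hinj.hasSum_iff hvanish).mpr hy
  have hx' : HasSum (fun m => C ^ 2 * ‖⟪e m, x⟫‖ ^ 2) (C ^ 2 * ‖x‖ ^ 2) :=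
    hx.mul_left _
  have hle : ∀ m, ‖⟪e (m + n), (S ^ n) x⟫‖ ^ 2 ≤ C ^ 2 * ‖⟪e m, x⟫‖ ^ 2 := by
    intro m
    rw [inner_pow_apply S e ω hS n m x, norm_mul]
    have h1 : ‖((∏ j ∈ Finset.range n, ω (m + j) : ℝ) : ℂ)‖
        = ∏ j ∈ Finset.range n, ω (m + j) := by
      rw [Complex.norm_real, Real.norm_eq_abs, abs_of_nonneg]
      exact Finset.prod_nonneg fun j _ => (hpos _).le
    rw [h1, mul_pow]
    have h2 : (∏ j ∈ Finset.range n, ω (m + j)) ^ 2 ≤ C ^ 2 := by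
      apply pow_le_pow_left₀ (Finset.prod_nonneg fun j _ => (hpos _).le) (hW m)
    exact mul_le_mul_of_nonneg_right h2 (by positivity)
  have hfin : ‖(S ^ n) x‖ ^ 2 ≤ C ^ 2 * ‖x‖ ^ 2 := hasSum_le hle hy' hx'
  have h3 : ‖(S ^ n) x‖ ^ 2 ≤ (C * ‖x‖) ^ 2 := by rw [mul_pow]; exact hfin
  have h4 := Real.sqrt_le_sqrt h3
  rwa [Real.sqrt_sq (norm_nonneg _), Real.sqrt_sq (by positivity)] at h4

/-- `0` belongs to the spectrum: the shift is not surjective. -/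
lemma zero_mem_spectrum (hS : ∀ n, S (e n) = (ω n : ℂ) • e (n + 1)) :
    (0 : ℂ) ∈ spectrum ℂ S := by
  by_contra h
  rw [spectrum.notMem_iff] at h
  obtain ⟨u, hu⟩ := h
  have hu' : (u : H →L[ℂ] H) = -S := by
    rw [hu]; simp
  have hsurj : S (-((↑u⁻¹ : H →L[ℂ] H) (e 0))) = e 0 := by
    have h1 : ((↑u : H →L[ℂ] H) * (↑u⁻¹ : H →L[ℂ] H)) (e 0) = e 0 := by
      rw [u.mul_inv]; rfl
    rw [map_neg]
    rw [hu'] at h1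
    simpa using h1
  have h2 : ⟪e 0, S (-((↑u⁻¹ : H →L[ℂ] H) (e 0)))⟫ = 0 := by
    rw [← ContinuousLinearMap.adjoint_inner_left S _ (e 0), adjoint_zero S e ω hS, inner_zero_left]
  rw [hsurj, inner_basis_basis, if_pos rfl] at h2
  exact one_ne_zero h2

/-- The key estimate: if `λ ∉ σ(S)` and `λ ≠ 0`, the weight products are controlled
by powers of `‖λ‖`. -/
lemma weight_prod_bound (hpos : ∀ n, 0 < ω n)
    (hS : ∀ n, S (e n) = (ω n : ℂ) • e (n + 1)) {lam : ℂ}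
    (hlam : lam ∉ spectrum ℂ S) (hlam0 : lam ≠ 0) :
    ∃ C : ℝ, 0 ≤ C ∧ ∀ n k, (∏ j ∈ Finset.range n, ω (k + j)) ≤ C * ‖lam‖ ^ (n + 1) := by
  rw [spectrum.notMem_iff] at hlam
  obtain ⟨u, hu⟩ := hlam
  refine ⟨‖(↑u⁻¹ : H →L[ℂ] H)‖, norm_nonneg _, fun n k => ?_⟩
  set R : H →L[ℂ] H := (↑u⁻¹ : H →L[ℂ] H) with hR
  set x : H := R (e k) with hx
  have hxsol : lam • x - S x = e k := by
    have h1 : ((↑u : H →L[ℂ] H) * R) (e k) = e k := by rw [u.mul_inv]; rfl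
    have h2 : ((↑u : H →L[ℂ] H) * R) (e k) = (algebraMap ℂ (H →L[ℂ] H) lam - S) x := by
      rw [hu]; rfl
    rw [h2] at h1
    rw [← h1]
    simp [Algebra.algebraMap_eq_smul_one]
  set a : ℕ → ℂ := fun m => ⟪e m, x⟫ with ha
  have hEq : ∀ m, lam * a m - ⟪ContinuousLinearMap.adjoint S (e m), x⟫
      = (if m = k then 1 else 0) := by
    intro m
    have h1 := congrArg (fun z => ⟪e m, z⟫) hxsol
    simp only [inner_sub_right, inner_smul_right] at h1
    rw [inner_basis_basis] at h1
    rw [← h1, ContinuousLinearMap.adjoint_inner_left S x (e m)]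
  have hE0 : lam * a 0 = (if 0 = k then 1 else 0) := by
    have := hEq 0
    rwa [adjoint_zero S e ω hS, inner_zero_left, sub_zero] at this
  have hEs : ∀ m, lam * a (m + 1) - (ω m : ℂ) * a m = (if m + 1 = k then 1 else 0) := by
    intro m
    have := hEq (m + 1)
    rwa [adjoint_succ S e ω hS, inner_smul_left, Complex.conj_ofReal] at this
  have hzero : ∀ m, m < k → a m = 0 := by
    intro m
    induction m with
    | zero =>
      intro h
      have h1 := hE0
      rw [if_neg (by omega)] at h1
      exact (mul_eq_zero.mp h1).resolve_left hlam0
    | succ m ih =>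
      intro h
      have h1 := hEs m
      rw [if_neg (by omega), ih (by omega), mul_zero, sub_zero] at h1
      exact (mul_eq_zero.mp h1).resolve_left hlam0
  have hak : ∀ n, lam ^ (n + 1) * a (k + n)
      = ((∏ j ∈ Finset.range n, ω (k + j) : ℝ) : ℂ) := by
    intro n
    induction n with
    | zero =>
      have hbase : lam * a k = 1 := by
        cases k with
        | zero => simpa using hE0
        | succ k' =>
          have h1 := hEs k'
          rw [if_pos rfl, hzero k' (by omega), mul_zero, sub_zero] at h1
          exact h1
      simpa using hbase
    | succ n ih =>
      have h1 := hEs (k + n)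
      rw [if_neg (by omega), sub_eq_zero] at h1
      calc lam ^ (n + 1 + 1) * a (k + (n + 1))
          = lam ^ (n + 1) * (lam * a (k + n + 1)) := by rw [← add_assoc]; ring
        _ = lam ^ (n + 1) * ((ω (k + n) : ℂ) * a (k + n)) := by rw [h1]
        _ = (ω (k + n) : ℂ) * (lam ^ (n + 1) * a (k + n)) := by ring
        _ = (ω (k + n) : ℂ) * ((∏ j ∈ Finset.range n, ω (k + j) : ℝ) : ℂ) := by rw [ih]
        _ = ((∏ j ∈ Finset.range (n + 1), ω (k + j) : ℝ) : ℂ) := by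
            rw [Finset.prod_range_succ]
            push_cast
            ring
  have hnorm : ‖a (k + n)‖ ≤ ‖R‖ := by
    calc ‖a (k + n)‖ ≤ ‖e (k + n)‖ * ‖x‖ := norm_inner_le_norm _ _
    _ = ‖x‖ := by rw [norm_basis, one_mul]
    _ ≤ ‖R‖ * ‖e k‖ := R.le_opNorm _
    _ = ‖R‖ := by rw [norm_basis, mul_one]
  have h5 := congrArg norm (hak n)
  rw [norm_mul, norm_pow, Complex.norm_real, Real.norm_eq_abs,
    abs_of_nonneg (Finset.prod_nonneg fun j _ => (hpos _).le)] at h5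
  rw [← h5, mul_comm (‖R‖)]
  exact mul_le_mul_of_nonneg_left hnorm (by positivity)

end Shift

end WeightedShiftAux

open WeightedShiftAux in
/-- The spectrum of a unilateral weighted shift with positive bounded weights is the
closed disc of radius the spectral radius. -/
theorem spectrum_weighted_shift_eq_closedBall (S : H →L[ℂ] H)
    (e : HilbertBasis ℕ ℂ H) (ω : ℕ → ℝ) (hpos : ∀ n, 0 < ω n)
    (hbd : ∃ M : ℝ, ∀ n, ω n ≤ M)
    (hS : ∀ n, S (e n) = (ω n : ℂ) • e (n + 1)) :
    spectrum ℂ S = Metric.closedBall (0 : ℂ) (spectralRadius ℂ S).toReal := by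
  haveI : Nontrivial H := by
    refine nontrivial_of_ne (e 0) 0 fun h => ?_
    have := norm_basis e 0
    rw [h, norm_zero] at this
    norm_num at this
  have h0mem : (0 : ℂ) ∈ spectrum ℂ S := zero_mem_spectrum S e ω hS
  have hρtop : spectralRadius ℂ S ≠ ⊤ :=
    ne_top_of_le_ne_top ENNReal.coe_ne_top (spectrum.spectralRadius_le_nnnorm (𝕜 := ℂ) S)
  have hmem_le : ∀ μ ∈ spectrum ℂ S, ‖μ‖ ≤ (spectralRadius ℂ S).toReal := by
    intro μ hμ
    have h1 : (‖μ‖₊ : ℝ≥0∞) ≤ spectralRadius ℂ S :=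
      le_iSup₂ (f := fun k (_ : k ∈ spectrum ℂ S) => (‖k‖₊ : ℝ≥0∞)) μ hμ
    have h2 := ENNReal.toReal_mono hρtop h1
    simpa using h2
  -- the crucial step: points of the open ball are in the spectrum
  have hball : ∀ lam : ℂ, ‖lam‖ < (spectralRadius ℂ S).toReal → lam ∈ spectrum ℂ S := by
    intro lam hlt
    by_contra hlam
    have hlam0 : lam ≠ 0 := fun h => hlam (h ▸ h0mem)
    obtain ⟨C, hC, hW⟩ := weight_prod_bound S e ω hpos hS hlam hlam0
    -- every spectral value has modulus at most ‖lam‖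
    have hspec_le : ∀ μ ∈ spectrum ℂ S, ‖μ‖ ≤ ‖lam‖ := by
      intro μ hμ
      by_contra hgt
      push_neg at hgt
      have hlampos : 0 < ‖lam‖ := norm_pos_iff.mpr hlam0
      have hq : 1 < ‖μ‖ / ‖lam‖ := (one_lt_div hlampos).mpr hgt
      have hbound : ∀ n : ℕ, (‖μ‖ / ‖lam‖) ^ n ≤ C * ‖lam‖ := by
        intro n
        have himg : μ ^ n ∈ (fun k => Polynomial.eval k ((Polynomial.X : Polynomial ℂ) ^ n)) ''
            spectrum ℂ S := ⟨μ, hμ, by simp⟩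
        have hpow : μ ^ n ∈ spectrum ℂ (S ^ n) := by
          simpa using spectrum.subset_polynomial_aeval S ((Polynomial.X : Polynomial ℂ) ^ n) himg
        have hSn : ‖S ^ n‖ ≤ C * ‖lam‖ ^ (n + 1) :=
          opNorm_pow_le S e ω hpos hS n (by positivity) (hW n)
        have h1 : ‖μ‖ ^ n ≤ C * ‖lam‖ ^ (n + 1) := by
          calc ‖μ‖ ^ n = ‖μ ^ n‖ := (norm_pow μ n).symm
          _ ≤ ‖S ^ n‖ := spectrum.norm_le_norm_of_mem hpow
          _ ≤ C * ‖lam‖ ^ (n + 1) := hSn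
        rw [div_pow, div_le_iff₀ (by positivity)]
        calc ‖μ‖ ^ n ≤ C * ‖lam‖ ^ (n + 1) := h1
        _ = C * ‖lam‖ * ‖lam‖ ^ n := by ring
      obtain ⟨n, hn⟩ := ((tendsto_pow_atTop_atTop_of_one_lt hq).eventually_gt_atTop
        (C * ‖lam‖)).exists
      exact absurd (hbound n) (not_le.mpr hn)
    -- hence the spectral radius is at most ‖lam‖, contradiction
    have hρle : spectralRadius ℂ S ≤ (‖lam‖₊ : ℝ≥0∞) := by
      refine iSup₂_le fun μ hμ => ?_
      exact_mod_cast ENNReal.coe_le_coe.mpr (by exact_mod_cast hspec_le μ hμ)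
    have : (spectralRadius ℂ S).toReal ≤ ‖lam‖ := by
      have := ENNReal.toReal_mono ENNReal.coe_ne_top hρle
      simpa using this
    linarith
  apply le_antisymm
  · intro μ hμ
    rw [Metric.mem_closedBall, dist_zero_right]
    exact hmem_le μ hμ
  · intro lam hlam
    rw [Metric.mem_closedBall, dist_zero_right] at hlam
    rcases eq_or_lt_of_le hlam with heq | hlt
    · -- boundary case: use closedness of the spectrum
      rcases eq_or_lt_of_le (ENNReal.toReal_nonneg (a := spectralRadius ℂ S)) with hr0 | hrpos
      · have : ‖lam‖ = 0 := by rw [heq, ← hr0]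
        have : lam = 0 := norm_eq_zero.mp this
        rw [this]; exact h0mem
      · have hcball : Metric.closedBall (0 : ℂ) (spectralRadius ℂ S).toReal
            = closure (Metric.ball (0 : ℂ) (spectralRadius ℂ S).toReal) :=
          (closure_ball (0 : ℂ) (ne_of_gt hrpos)).symm
        have hsub : Metric.ball (0 : ℂ) (spectralRadius ℂ S).toReal ⊆ spectrum ℂ S := by
          intro z hz
          rw [Metric.mem_ball, dist_zero_right] at hz
          exact hball z hz
        have hmem : lam ∈ closure (Metric.ball (0 : ℂ) (spectralRadius ℂ S).toReal) := by
          rw [← hcball, Metric.mem_closedBall, dist_zero_right]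
          exact hlam
        have := closure_mono hsub hmem
        rwa [(spectrum.isClosed (𝕜 := ℂ) S).closure_eq] at this
    · exact hball lam hlt
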